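/- Let α₁ = (0 3 2)(1 4 5)(6 8 9)(7 10 11), α₂ = (0 4)(1 2)(3 5)(6 10)(7 9)(8 11), α₃ = (0 9)(1 11)(2 8)(3 6)(4 7)(5 10) be permutations of {0,…,11}. Then α₁, α₂, α₃ pairwise commute, and the subgroup of the symmetric group on 12 letters that they generate is an abelian group of order 12 isomorphic to ℤ/2 × ℤ/2 × ℤ/3. -/

import Mathlib

open Equiv

/-- α₁ = (0 3 2)(1 4 5)(6 8 9)(7 10 11) -/
def ko1Alpha1 : Equiv.Perm (Fin 12) :=
  (swap 0 3 * swap 3 2) * (swap 1 4 * swap 4 5) * (swap 6 8 * swap 8 9) *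
    (swap 7 10 * swap 10 11)

/-- α₂ = (0 4)(1 2)(3 5)(6 10)(7 9)(8 11) -/
def ko1Alpha2 : Equiv.Perm (Fin 12) :=
  swap 0 4 * swap 1 2 * swap 3 5 * swap 6 10 * swap 7 9 * swap 8 11

/-- α₃ = (0 9)(1 11)(2 8)(3 6)(4 7)(5 10) -/
def ko1Alpha3 : Equiv.Perm (Fin 12) :=
  swap 0 9 * swap 1 11 * swap 2 8 * swap 3 6 * swap 4 7 * swap 5 10

/-- Homomorphism from ℤ/2 × ℤ/2 × ℤ/3 sending generators to α₂, α₃, α₁. -/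
def koF : Multiplicative (ZMod 2 × ZMod 2 × ZMod 3) →* Equiv.Perm (Fin 12) where
  toFun x := ko1Alpha2 ^ (Multiplicative.toAdd x).1.val *
    ko1Alpha3 ^ (Multiplicative.toAdd x).2.1.val *
    ko1Alpha1 ^ (Multiplicative.toAdd x).2.2.val
  map_one' := by decide
  map_mul' := by decide

set_option maxRecDepth 100000 in
lemma koF_inj : Function.Injective koF := by decide

lemma koF_range : koF.range =
    Subgroup.closure ({ko1Alpha1, ko1Alpha2, ko1Alpha3} : Set (Equiv.Perm (Fin 12))) := by
  apply le_antisymm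
  · rintro _ ⟨x, rfl⟩
    have h1 : ko1Alpha1 ∈ Subgroup.closure
        ({ko1Alpha1, ko1Alpha2, ko1Alpha3} : Set (Equiv.Perm (Fin 12))) :=
      Subgroup.subset_closure (by simp)
    have h2 : ko1Alpha2 ∈ Subgroup.closure
        ({ko1Alpha1, ko1Alpha2, ko1Alpha3} : Set (Equiv.Perm (Fin 12))) :=
      Subgroup.subset_closure (by simp)
    have h3 : ko1Alpha3 ∈ Subgroup.closure
        ({ko1Alpha1, ko1Alpha2, ko1Alpha3} : Set (Equiv.Perm (Fin 12))) :=
      Subgroup.subset_closure (by simp)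
    exact Subgroup.mul_mem _ (Subgroup.mul_mem _ (Subgroup.pow_mem _ h2 _)
      (Subgroup.pow_mem _ h3 _)) (Subgroup.pow_mem _ h1 _)
  · rw [Subgroup.closure_le]
    rintro x hx
    rcases hx with rfl | rfl | rfl
    · exact ⟨Multiplicative.ofAdd (0, 0, 1), by decide⟩
    · exact ⟨Multiplicative.ofAdd (1, 0, 0), by decide⟩
    · exact ⟨Multiplicative.ofAdd (0, 1, 0), by decide⟩

theorem stmt11 :
    ko1Alpha1 * ko1Alpha2 = ko1Alpha2 * ko1Alpha1 ∧
    ko1Alpha1 * ko1Alpha3 = ko1Alpha3 * ko1Alpha1 ∧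
    ko1Alpha2 * ko1Alpha3 = ko1Alpha3 * ko1Alpha2 ∧
    Nat.card (Subgroup.closure
        ({ko1Alpha1, ko1Alpha2, ko1Alpha3} : Set (Equiv.Perm (Fin 12)))) = 12 ∧
    Nonempty ((Subgroup.closure
        ({ko1Alpha1, ko1Alpha2, ko1Alpha3} : Set (Equiv.Perm (Fin 12)))) ≃*
      Multiplicative (ZMod 2 × ZMod 2 × ZMod 3)) := by
  have e : Multiplicative (ZMod 2 × ZMod 2 × ZMod 3) ≃* koF.range :=
    MonoidHom.ofInjective koF_inj
  have e2 : koF.range ≃* Subgroup.closure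
      ({ko1Alpha1, ko1Alpha2, ko1Alpha3} : Set (Equiv.Perm (Fin 12))) :=
    MulEquiv.subgroupCongr koF_range
  refine ⟨by decide, by decide, by decide, ?_, ⟨(e.trans e2).symm⟩⟩
  rw [Nat.card_congr (e.trans e2).symm.toEquiv]
  simp [Nat.card_eq_fintype_card]
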